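/- Let A be a finite set of integers and h, s positive integers, and suppose that for each integer j there is a set I_j ⊆ A with |I_j| ≤ h. Then the number of strictly decreasing s-tuples (i_1 > i_2 > … > i_s) of elements of A satisfying i_j ∉ I_{i_1} ∪ I_{i_2} ∪ … ∪ I_{i_{j−1}} for every j = 1, …, s is at least the binomial coefficient C(|A| − (s−1)h, s). -/

import Mathlib

open Finset

/-- The finset of valid strictly decreasing s-tuples avoiding the forbidden sets. -/
private def TT (I : ℤ → Finset ℤ) (A : Finset ℤ) (s : ℕ) : Finset (Fin s → ℤ) :=
  (Fintype.piFinset fun _ => A).filter fun f =>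
    (∀ j k : Fin s, j < k → f k < f j) ∧ (∀ j k : Fin s, k < j → f j ∉ I (f k))

private lemma mem_TT {I : ℤ → Finset ℤ} {A : Finset ℤ} {s : ℕ} {f : Fin s → ℤ} :
    f ∈ TT I A s ↔ (∀ j, f j ∈ A) ∧ (∀ j k : Fin s, j < k → f k < f j) ∧
      (∀ j k : Fin s, k < j → f j ∉ I (f k)) := by
  simp [TT, Fintype.mem_piFinset, and_assoc]

private lemma hockey (m s : ℕ) :
    ∀ n, Nat.choose (n - m) (s + 1) ≤ ∑ k ∈ range n, Nat.choose (k - m) s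
  | 0 => by simp
  | n + 1 => by
    rw [Finset.sum_range_succ]
    calc Nat.choose (n + 1 - m) (s + 1) ≤ Nat.choose (n - m + 1) (s + 1) :=
          Nat.choose_le_choose _ (by omega)
      _ = Nat.choose (n - m) s + Nat.choose (n - m) (s + 1) := Nat.choose_succ_succ _ _
      _ ≤ _ := by have := hockey m s n; omega

private lemma key {h : ℕ} {I : ℤ → Finset ℤ} (hIcard : ∀ j, (I j).card ≤ h) :
    ∀ (s : ℕ) (A : Finset ℤ), Nat.choose (A.card - (s - 1) * h) s ≤ (TT I A s).card := by
  intro s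
  induction s with
  | zero =>
    intro A
    rw [Nat.choose_zero_right]
    rw [Finset.one_le_card]
    exact ⟨fun i => i.elim0, mem_TT.2 ⟨fun j => j.elim0, fun j => j.elim0, fun j => j.elim0⟩⟩
  | succ s ih =>
    intro A
    set n := A.card with hn
    -- the rank of a in A
    set r : ℤ → ℕ := fun a => (A.filter (· < a)).card with hr
    -- the restricted set
    set A' : ℤ → Finset ℤ := fun a => A.filter fun x => x < a ∧ x ∉ I a with hA'
    clear_value n r A'
    -- fiberwise count
    have hfib : (TT I A (s + 1)).card =
        ∑ a ∈ A, ((TT I A (s + 1)).filter fun f => f 0 = a).card := by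
      apply Finset.card_eq_sum_card_fiberwise
      intro f hf
      exact (mem_TT.1 hf).1 0
    -- each fiber dominates TT I (A' a) s via Fin.cons
    have hcons : ∀ a ∈ A, (TT I (A' a) s).card ≤
        ((TT I A (s + 1)).filter fun f => f 0 = a).card := by
      intro a ha
      apply Finset.card_le_card_of_injOn (fun g : Fin s → ℤ => Fin.cons (α := fun _ => ℤ) a g)
      · intro g hg
        obtain ⟨hg1, hg2, hg3⟩ := mem_TT.1 hg
        have hg1' : ∀ j, g j ∈ A ∧ g j < a ∧ g j ∉ I a := by
          intro j
          have := hg1 j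
          rw [hA'] at this
          simpa using Finset.mem_filter.1 this
        rw [Finset.mem_coe, Finset.mem_filter]
        refine ⟨mem_TT.2 ⟨?_, ?_, ?_⟩, Fin.cons_zero _ _⟩
        · intro j
          induction j using Fin.cases with
          | zero => simpa using ha
          | succ i => simpa using (hg1' i).1
        · intro j k hjk
          have hk0 : k ≠ 0 := fun hk => by simp [hk] at hjk
          obtain ⟨k', rfl⟩ := Fin.eq_succ_of_ne_zero hk0
          induction j using Fin.cases with
          | zero => simpa using (hg1' k').2.1
          | succ j' =>
            have : j' < k' := by
              rwa [Fin.succ_lt_succ_iff] at hjk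
            simpa using hg2 j' k' this
        · intro j k hkj
          have hj0 : j ≠ 0 := fun hj => by simp [hj] at hkj
          obtain ⟨j', rfl⟩ := Fin.eq_succ_of_ne_zero hj0
          induction k using Fin.cases with
          | zero => simpa using (hg1' j').2.2
          | succ k' =>
            have : k' < j' := by
              rwa [Fin.succ_lt_succ_iff] at hkj
            simpa using hg3 j' k' this
      · exact (Fin.cons_right_injective (α := fun _ : Fin (s+1) => ℤ) a).injOn
    -- IH plus cardinality bound on A' a
    have hA'card : ∀ a ∈ A, r a - h ≤ (A' a).card := by
      intro a ha
      have hsub : (A.filter (· < a)) \ I a ⊆ A' a := by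
        intro x hx
        rw [Finset.mem_sdiff, Finset.mem_filter] at hx
        rw [hA']
        simp only [Finset.mem_filter]
        exact ⟨hx.1.1, hx.1.2, hx.2⟩
      simp only [hr]
      calc (A.filter (· < a)).card - h ≤ (A.filter (· < a)).card - (I a).card :=
            Nat.sub_le_sub_left (hIcard a) _
        _ ≤ ((A.filter (· < a)) \ I a).card := Finset.le_card_sdiff _ _
        _ ≤ (A' a).card := Finset.card_le_card hsub
    have hstep : ∀ a ∈ A, Nat.choose (r a - s * h) s ≤ (TT I (A' a) s).card := by
      intro a ha
      refine le_trans ?_ (ih (A' a))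
      cases s with
      | zero => simp
      | succ t =>
        apply Nat.choose_le_choose
        have h1 := hA'card a ha
        have h2 : (t + 1) * h = t * h + h := by ring
        simp only [Nat.add_sub_cancel]
        clear hfib hcons hA'card
        omega
    -- rank is injective on A with image range n
    have hrlt : ∀ a ∈ A, ∀ b ∈ A, a < b → r a < r b := by
      intro a ha b hb hab
      simp only [hr]
      apply Finset.card_lt_card
      rw [Finset.ssubset_iff_of_subset]
      · exact ⟨a, by simp [ha, hab], by simp⟩
      · intro x hx
        rw [Finset.mem_filter] at hx ⊢
        exact ⟨hx.1, lt_trans hx.2 hab⟩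
    have hrinj : Set.InjOn r A := by
      intro a ha b hb hab
      rcases lt_trichotomy a b with hlt | heq | hgt
      · exact absurd hab (ne_of_lt (hrlt a ha b hb hlt))
      · exact heq
      · exact absurd hab.symm (ne_of_lt (hrlt b hb a ha hgt))
    have himg : A.image r = range n := by
      apply Finset.eq_of_subset_of_card_le
      · intro k hk
        obtain ⟨a, ha, rfl⟩ := Finset.mem_image.1 hk
        rw [Finset.mem_range, hn]
        simp only [hr]
        apply Finset.card_lt_card
        rw [Finset.ssubset_iff_of_subset (Finset.filter_subset _ _)]
        exact ⟨a, ha, by simp⟩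
      · rw [Finset.card_range, Finset.card_image_of_injOn hrinj, hn]
    have hsum : ∑ a ∈ A, Nat.choose (r a - s * h) s =
        ∑ k ∈ range n, Nat.choose (k - s * h) s := by
      rw [← himg, Finset.sum_image (fun a ha b hb => hrinj ha hb)]
    calc Nat.choose (n - (s + 1 - 1) * h) (s + 1)
        = Nat.choose (n - s * h) (s + 1) := by norm_num
      _ ≤ ∑ k ∈ range n, Nat.choose (k - s * h) s := hockey (s * h) s n
      _ = ∑ a ∈ A, Nat.choose (r a - s * h) s := hsum.symm
      _ ≤ ∑ a ∈ A, (TT I (A' a) s).card := Finset.sum_le_sum hstep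
      _ ≤ ∑ a ∈ A, ((TT I A (s + 1)).filter fun f => f 0 = a).card :=
          Finset.sum_le_sum hcons
      _ = (TT I A (s + 1)).card := hfib.symm

theorem stmt7 (A : Finset ℤ) (h s : ℕ) (hh : 0 < h) (hs : 0 < s)
    (I : ℤ → Finset ℤ) (hIA : ∀ j, I j ⊆ A) (hIcard : ∀ j, (I j).card ≤ h) :
    Nat.choose (A.card - (s - 1) * h) s ≤
      Set.ncard {f : Fin s → ℤ |
        (∀ j, f j ∈ A) ∧
        (∀ j k : Fin s, j < k → f k < f j) ∧
        (∀ j k : Fin s, k < j → f j ∉ I (f k))} := by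
  have hset : {f : Fin s → ℤ |
        (∀ j, f j ∈ A) ∧
        (∀ j k : Fin s, j < k → f k < f j) ∧
        (∀ j k : Fin s, k < j → f j ∉ I (f k))} = ↑(TT I A s) := by
    ext f; simp [mem_TT]
  rw [hset, Set.ncard_coe_finset]
  exact key hIcard s A
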